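/- The set of nonnegative integers whose base-3 representation uses only digits 0 and 1 contains no three-term arithmetic progression. -/

import Mathlib

/-- A set of naturals has no three-term arithmetic progression. -/
def ThreeAPFreeSet (S : Set ℕ) : Prop :=
  ∀ x ∈ S, ∀ y ∈ S, ∀ z ∈ S, x < y → y < z → x + z ≠ 2 * y

/-- `a` is the Stanley (greedy 3-AP-free) sequence with seed `{0, n}`:
`a 0 = 0`, `a 1 = n`, and for `k ≥ 2`, `a k` is the least `c > a (k-1)` such that
adjoining `c` to the previously chosen terms keeps the set 3-AP-free. -/
def IsStanley (n : ℕ) (a : ℕ → ℕ) : Prop :=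
  a 0 = 0 ∧ a 1 = n ∧
  ∀ k, 2 ≤ k →
    IsLeast {c | a (k - 1) < c ∧ ThreeAPFreeSet (insert c (a '' Set.Iio k))} (a k)

lemma digle (m : ℕ) (h : ∀ d ∈ Nat.digits 3 m, d ≤ 1) :
    m % 3 ≤ 1 ∧ ∀ d ∈ Nat.digits 3 (m / 3), d ≤ 1 := by
  rcases Nat.eq_zero_or_pos m with rfl | hm
  · simp
  · rw [Nat.digits_def' (by norm_num : 1 < 3) hm] at h
    exact ⟨h _ List.mem_cons_self, fun d hd => h d (List.mem_cons_of_mem _ hd)⟩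

lemma key : ∀ y x z : ℕ, (∀ d ∈ Nat.digits 3 x, d ≤ 1) →
    (∀ d ∈ Nat.digits 3 y, d ≤ 1) → (∀ d ∈ Nat.digits 3 z, d ≤ 1) →
    x + z = 2 * y → x = z := by
  intro y
  induction y using Nat.strong_induction_on with
  | _ y ih =>
    intro x z hx hy hz hsum
    rcases Nat.eq_zero_or_pos y with rfl | hy0
    · omega
    obtain ⟨hx1, hx2⟩ := digle x hx
    obtain ⟨hy1, hy2⟩ := digle y hy
    obtain ⟨hz1, hz2⟩ := digle z hz
    have hdiv : x / 3 + z / 3 = 2 * (y / 3) := by omega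
    have := ih (y / 3) (Nat.div_lt_self hy0 (by norm_num)) (x / 3) (z / 3) hx2 hy2 hz2 hdiv
    omega

theorem digits01_base3_apFree :
    ThreeAPFreeSet {m : ℕ | ∀ d ∈ Nat.digits 3 m, d ≤ 1} := by
  intro x hx y hy z hz hxy hyz hsum
  have := key y x z hx hy hz hsum
  omega
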